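/- Let n ≥ 1 and 1 ≤ k ≤ n. The set of extreme points of the convex set {P real symmetric n×n : 0 ⪯ P ⪯ I} is exactly the set of real symmetric n×n matrices Y with Y² = Y, and the set of extreme points of {P real symmetric n×n : 0 ⪯ P ⪯ I, trace(P) ≤ k} is exactly the set of real symmetric n×n matrices Y with Y² = Y and trace(Y) ≤ k. -/

import Mathlib

open Matrix

section Helpers

variable {n : ℕ}

private lemma OW.dot_nonneg {A : Matrix (Fin n) (Fin n) ℝ} (hA : A.PosSemidef) (x : Fin n → ℝ) :
    0 ≤ x ⬝ᵥ A *ᵥ x := by simpa using hA.dotProduct_mulVec_nonneg x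

private lemma OW.dot_zero {A : Matrix (Fin n) (Fin n) ℝ} (hA : A.PosSemidef) {x : Fin n → ℝ}
    (h : x ⬝ᵥ A *ᵥ x = 0) : A *ᵥ x = 0 :=
  (hA.dotProduct_mulVec_zero_iff x).mp (by simpa using h)

private lemma OW.ext_mulVec {A B : Matrix (Fin n) (Fin n) ℝ} (h : ∀ x, A *ᵥ x = B *ᵥ x) :
    A = B := by
  ext i j
  have := congrFun (h (Pi.single j 1)) i
  simpa [mulVec_single] using this

private lemma OW.vecMulVec_mulVec (v w x : Fin n → ℝ) :
    vecMulVec v w *ᵥ x = (w ⬝ᵥ x) • v := by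
  funext i
  simp only [mulVec, dotProduct, vecMulVec_apply, Pi.smul_apply, smul_eq_mul, mul_assoc]
  rw [← Finset.mul_sum, mul_comm]

private lemma OW.trace_vecMulVec (v : Fin n → ℝ) :
    (vecMulVec v v).trace = v ⬝ᵥ v := by
  simp [trace, Matrix.diag, vecMulVec_apply, dotProduct]

private lemma OW.psd_smul {A : Matrix (Fin n) (Fin n) ℝ} (hA : A.PosSemidef) {e : ℝ}
    (he : 0 ≤ e) : (e • A).PosSemidef := by
  refine PosSemidef.of_dotProduct_mulVec_nonneg ?_ ?_
  · show (e • A)ᵀ = e • A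
    have h : Aᵀ = A := hA.1
    rw [transpose_smul, h]
  · intro x
    have : star x ⬝ᵥ (e • A) *ᵥ x = e * (x ⬝ᵥ A *ᵥ x) := by
      simp [smul_mulVec, dotProduct_smul]
    rw [this]
    exact mul_nonneg he (OW.dot_nonneg hA x)

private lemma OW.psd_vecMulVec (v : Fin n → ℝ) : (vecMulVec v v).PosSemidef := by
  refine PosSemidef.of_dotProduct_mulVec_nonneg ?_ ?_
  · show (vecMulVec v v)ᵀ = vecMulVec v v
    ext i j
    simp [vecMulVec_apply, mul_comm]
  · intro x
    rw [star_trivial, OW.vecMulVec_mulVec, dotProduct_smul, smul_eq_mul, dotProduct_comm x v]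
    exact mul_self_nonneg _

private lemma OW.psd_smul_vecMulVec {e : ℝ} (he : 0 ≤ e) (v : Fin n → ℝ) :
    (e • vecMulVec v v).PosSemidef :=
  OW.psd_smul (OW.psd_vecMulVec v) he

/-- Deflation: subtracting `ε vvᵀ` from a PSD matrix with eigenvector `v` of eigenvalue
`μ ≥ ε` keeps it PSD. -/
private lemma OW.deflate {P : Matrix (Fin n) (Fin n) ℝ} (hP : P.PosSemidef)
    {v : Fin n → ℝ} {μ e : ℝ} (hv : P *ᵥ v = μ • v) (hvv : v ⬝ᵥ v = 1)
    (he : 0 ≤ e) (heμ : e ≤ μ) : (P - e • vecMulVec v v).PosSemidef := by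
  have hT : Pᵀ = P := (hP.1 : P.IsSymm)
  have hvP : ∀ x : Fin n → ℝ, v ⬝ᵥ P *ᵥ x = μ * (v ⬝ᵥ x) := by
    intro x
    rw [dotProduct_mulVec, ← hT, vecMul_transpose, hv, smul_dotProduct, smul_eq_mul]
  refine PosSemidef.of_dotProduct_mulVec_nonneg ?_ ?_
  · exact hP.1.sub (OW.psd_smul_vecMulVec he v).1
  · intro x
    simp only [star_trivial]
    set c := v ⬝ᵥ x with hc
    have hq : x ⬝ᵥ (P - e • vecMulVec v v) *ᵥ x = x ⬝ᵥ P *ᵥ x - e * (c * c) := by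
      rw [sub_mulVec, dotProduct_sub, smul_mulVec, OW.vecMulVec_mulVec,
        dotProduct_smul, dotProduct_smul, smul_eq_mul, smul_eq_mul, dotProduct_comm x v, ← hc]
    have hw : 0 ≤ (x - c • v) ⬝ᵥ P *ᵥ (x - c • v) := OW.dot_nonneg hP _
    have hexp : (x - c • v) ⬝ᵥ P *ᵥ (x - c • v) = x ⬝ᵥ P *ᵥ x - μ * (c * c) := by
      rw [mulVec_sub, mulVec_smul, hv]
      simp only [dotProduct_sub, sub_dotProduct, dotProduct_smul, smul_dotProduct,
        smul_smul, smul_eq_mul]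
      rw [hvP x, hvv, dotProduct_comm x v, ← hc]
      ring
    rw [hq]
    nlinarith [mul_self_nonneg c]

/-- `P - P²` is PSD when `0 ⪯ P ⪯ 1`. -/
private lemma OW.psd_sub_sq {P : Matrix (Fin n) (Fin n) ℝ} (hP : P.PosSemidef)
    (hQ : (1 - P).PosSemidef) : (P - P * P).PosSemidef := by
  have key : P - P * P = Pᴴ * (1 - P) * P + (1 - P)ᴴ * P * (1 - P) := by
    rw [(hP.1 : Pᴴ = P), (hQ.1 : (1 - P)ᴴ = 1 - P)]
    noncomm_ring
  rw [key]
  exact (hQ.conjTranspose_mul_mul_same P).add (hP.conjTranspose_mul_mul_same (1 - P))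

private lemma OW.trace_nonneg {A : Matrix (Fin n) (Fin n) ℝ} (hA : A.PosSemidef) :
    0 ≤ A.trace := by
  rw [trace]
  refine Finset.sum_nonneg fun i _ => ?_
  have := OW.dot_nonneg hA (Pi.single i 1)
  simpa [mulVec_single, Matrix.diag] using this

/-- Endpoints of a segment through a projection inside the PSD order interval collapse. -/
private lemma OW.endpoint_eq {Y A B : Matrix (Fin n) (Fin n) ℝ}
    (hi : Y * Y = Y)
    (hA : A.PosSemidef) (hA' : (1 - A).PosSemidef)
    (hB : B.PosSemidef) (hB' : (1 - B).PosSemidef)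
    {a b : ℝ} (ha : 0 < a) (hb : 0 < b) (hab : a + b = 1)
    (hsum : a • A + b • B = Y) : A = Y := by
  have hker : ∀ z, Y *ᵥ z = 0 → A *ᵥ z = 0 := by
    intro z hz
    have h0 : z ⬝ᵥ Y *ᵥ z = 0 := by rw [hz, dotProduct_zero]
    rw [← hsum, add_mulVec, smul_mulVec, smul_mulVec, dotProduct_add,
      dotProduct_smul, dotProduct_smul, smul_eq_mul, smul_eq_mul] at h0
    have h1 := OW.dot_nonneg hA z
    have h2 := OW.dot_nonneg hB z
    refine OW.dot_zero hA ?_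
    nlinarith
  have hone : ∀ z, Y *ᵥ z = z → A *ᵥ z = z := by
    intro z hz
    have hsum' : a • (1 - A) + b • (1 - B) = 1 - Y := by
      have h1 : a • ((1 : Matrix (Fin n) (Fin n) ℝ) - A) + b • (1 - B)
          = (a + b) • (1 : Matrix (Fin n) (Fin n) ℝ) - (a • A + b • B) := by module
      rw [h1, hab, one_smul, hsum]
    have hz' : (1 - Y) *ᵥ z = 0 := by rw [sub_mulVec, one_mulVec, hz, sub_self]
    have h0 : z ⬝ᵥ (1 - Y) *ᵥ z = 0 := by rw [hz', dotProduct_zero]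
    rw [← hsum', add_mulVec, smul_mulVec, smul_mulVec, dotProduct_add,
      dotProduct_smul, dotProduct_smul, smul_eq_mul, smul_eq_mul] at h0
    have h1 := OW.dot_nonneg hA' z
    have h2 := OW.dot_nonneg hB' z
    have h3 : (1 - A) *ᵥ z = 0 := OW.dot_zero hA' (by nlinarith)
    rw [sub_mulVec, one_mulVec, sub_eq_zero] at h3
    exact h3.symm
  refine OW.ext_mulVec fun x => ?_
  have e1 : A *ᵥ (Y *ᵥ x) = Y *ᵥ x := hone _ (by rw [mulVec_mulVec, hi])
  have e2 : A *ᵥ (x - Y *ᵥ x) = 0 :=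
    hker _ (by rw [mulVec_sub, mulVec_mulVec, hi, sub_self])
  calc A *ᵥ x = A *ᵥ (Y *ᵥ x + (x - Y *ᵥ x)) := by rw [add_sub_cancel]
    _ = A *ᵥ (Y *ᵥ x) + A *ᵥ (x - Y *ᵥ x) := mulVec_add _ _ _
    _ = Y *ᵥ x := by rw [e1, e2, add_zero]

private lemma OW.proj_psd {Y : Matrix (Fin n) (Fin n) ℝ} (hs : Y.IsSymm) (hi : Y * Y = Y) :
    Y.PosSemidef := by
  have hherm : Yᴴ = Y := (hs : Y.IsHermitian)
  have : Y = Yᴴ * Y := by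
    conv_lhs => rw [← hi]
    rw [hherm]
  rw [this]
  exact posSemidef_conjTranspose_mul_self Y

private lemma OW.one_sub_proj {Y : Matrix (Fin n) (Fin n) ℝ} (hs : Y.IsSymm) (hi : Y * Y = Y) :
    ((1 : Matrix (Fin n) (Fin n) ℝ) - Y).IsSymm ∧ (1 - Y) * (1 - Y) = 1 - Y := by
  constructor
  · show (1 - Y)ᵀ = 1 - Y
    rw [transpose_sub, transpose_one, (hs : Yᵀ = Y)]
  · have : (1 - Y) * (1 - Y) = 1 - Y - Y + Y * Y := by noncomm_ring
    rw [this, hi]; abel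

end Helpers

/-- Extreme-point statement of Lemma 1 (Overton–Womersley): the extreme points of
`{P : 0 ⪯ P ⪯ I}` are exactly the orthogonal projection matrices, and the extreme
points of `{P : 0 ⪯ P ⪯ I, trace(P) ≤ k}` are exactly the orthogonal projection
matrices of trace at most `k`. -/
theorem stmt16 (n k : ℕ) (hn : 1 ≤ n) (hk1 : 1 ≤ k) (hkn : k ≤ n) :
    Set.extremePoints ℝ
        {P : Matrix (Fin n) (Fin n) ℝ | P.PosSemidef ∧ (1 - P).PosSemidef} =
      {Y : Matrix (Fin n) (Fin n) ℝ | Y.IsSymm ∧ Y * Y = Y} ∧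
    Set.extremePoints ℝ
        {P : Matrix (Fin n) (Fin n) ℝ |
          P.PosSemidef ∧ (1 - P).PosSemidef ∧ P.trace ≤ (k : ℝ)} =
      {Y : Matrix (Fin n) (Fin n) ℝ | Y.IsSymm ∧ Y * Y = Y ∧ Y.trace ≤ (k : ℝ)} := by
  constructor
  · -- First set equality
    ext P
    rw [mem_extremePoints]
    simp only [Set.mem_setOf_eq]
    constructor
    · rintro ⟨⟨hP, hQ⟩, hext⟩
      refine ⟨hP.1, ?_⟩
      by_contra hne
      set D := P - P * P with hD
      have hDpsd : D.PosSemidef := OW.psd_sub_sq hP hQ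
      have hDne : D ≠ 0 := sub_ne_zero.mpr fun h => hne h.symm
      have hA : (P + D).PosSemidef := hP.add hDpsd
      have hA' : (1 - (P + D)).PosSemidef := by
        have h1 : 1 - (P + D) = (1 - P)ᴴ * (1 - P) := by
          rw [(hQ.1 : (1 - P)ᴴ = 1 - P), hD]; noncomm_ring
        rw [h1]; exact posSemidef_conjTranspose_mul_self _
      have hB : (P - D).PosSemidef := by
        have h1 : P - D = Pᴴ * P := by
          rw [(hP.1 : Pᴴ = P), hD]; noncomm_ring
        rw [h1]; exact posSemidef_conjTranspose_mul_self _
      have hB' : (1 - (P - D)).PosSemidef := by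
        have h1 : 1 - (P - D) = (1 - P) + D := by abel
        rw [h1]; exact hQ.add hDpsd
      have hseg : P ∈ openSegment ℝ (P + D) (P - D) :=
        ⟨1/2, 1/2, by norm_num, by norm_num, by norm_num, by module⟩
      have hcol := (hext _ ⟨hA, hA'⟩ _ ⟨hB, hB'⟩ hseg).1
      exact hDne (by rwa [add_eq_left] at hcol)
    · rintro ⟨hs, hi⟩
      obtain ⟨hs', hi'⟩ := OW.one_sub_proj hs hi
      refine ⟨⟨OW.proj_psd hs hi, OW.proj_psd hs' hi'⟩, ?_⟩
      rintro A ⟨hA, hA'⟩ B ⟨hB, hB'⟩ ⟨a, b, ha, hb, hab, hsum⟩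
      exact ⟨OW.endpoint_eq hi hA hA' hB hB' ha hb hab hsum,
        OW.endpoint_eq hi hB hB' hA hA' hb ha (by linarith)
          (by rw [add_comm]; exact hsum)⟩
  · -- Second set equality
    ext P
    rw [mem_extremePoints]
    simp only [Set.mem_setOf_eq]
    constructor
    · rintro ⟨⟨hP, hQ, htr⟩, hext⟩
      refine ⟨hP.1, ?_, htr⟩
      by_contra hne
      by_cases hlt : P.trace < (k : ℝ)
      · -- small perturbation by D = P - P²
        set D := P - P * P with hD
        have hDpsd : D.PosSemidef := OW.psd_sub_sq hP hQ
        have hDne : D ≠ 0 := sub_ne_zero.mpr fun h => hne h.symm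
        have htD : 0 ≤ D.trace := OW.trace_nonneg hDpsd
        set e := min 1 (((k : ℝ) - P.trace) / (D.trace + 1)) with he
        have hepos : 0 < e :=
          lt_min one_pos (div_pos (by linarith) (by linarith))
        have he1 : e ≤ 1 := min_le_left _ _
        have he2 : e * (D.trace + 1) ≤ (k : ℝ) - P.trace := by
          rw [← le_div_iff₀ (by linarith)]
          exact min_le_right _ _
        have heD : e * D.trace ≤ (k : ℝ) - P.trace := by nlinarith
        have hsq1 : (1 : Matrix (Fin n) (Fin n) ℝ) - P - D = (1 - P)ᴴ * (1 - P) := by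
          rw [(hQ.1 : (1 - P)ᴴ = 1 - P), hD]; noncomm_ring
        have hsq2 : P - D = Pᴴ * P := by
          rw [(hP.1 : Pᴴ = P), hD]; noncomm_ring
        have hA : (P + e • D).PosSemidef := hP.add (OW.psd_smul hDpsd hepos.le)
        have hA' : (1 - (P + e • D)).PosSemidef := by
          have h1 : 1 - (P + e • D) = (1 - e) • (1 - P) + e • (1 - P - D) := by module
          rw [h1, hsq1]
          exact (OW.psd_smul hQ (by linarith)).add
            (OW.psd_smul (posSemidef_conjTranspose_mul_self _) hepos.le)
        have hB : (P - e • D).PosSemidef := by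
          have h1 : P - e • D = (1 - e) • P + e • (P - D) := by module
          rw [h1, hsq2]
          exact (OW.psd_smul hP (by linarith)).add
            (OW.psd_smul (posSemidef_conjTranspose_mul_self _) hepos.le)
        have hB' : (1 - (P - e • D)).PosSemidef := by
          have h1 : 1 - (P - e • D) = (1 - P) + e • D := by module
          rw [h1]; exact hQ.add (OW.psd_smul hDpsd hepos.le)
        have htA : (P + e • D).trace ≤ (k : ℝ) := by
          rw [trace_add, trace_smul, smul_eq_mul]; linarith
        have htB : (P - e • D).trace ≤ (k : ℝ) := by
          rw [trace_sub, trace_smul, smul_eq_mul]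
          nlinarith
        have hseg : P ∈ openSegment ℝ (P + e • D) (P - e • D) :=
          ⟨1/2, 1/2, by norm_num, by norm_num, by norm_num, by module⟩
        have hcol := (hext _ ⟨hA, hA', htA⟩ _ ⟨hB, hB', htB⟩ hseg).1
        rw [add_eq_left, smul_eq_zero] at hcol
        rcases hcol with h | h
        · exact hepos.ne' h
        · exact hDne h
      · -- trace equals k exactly: use two eigenvalues strictly inside (0,1)
        have heqk : P.trace = (k : ℝ) := le_antisymm htr (not_lt.mp hlt)
        have hH : P.IsHermitian := hP.1
        set lam := hH.eigenvalues with hlam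
        set u : Fin n → (Fin n → ℝ) := fun i => ⇑(hH.eigenvectorBasis i) with hu
        have hmv : ∀ i, P *ᵥ u i = lam i • u i := fun i => hH.mulVec_eigenvectorBasis i
        have hdot : ∀ i j, u i ⬝ᵥ u j = if i = j then 1 else 0 := by
          intro i j
          have h := orthonormal_iff_ite.mp hH.eigenvectorBasis.orthonormal i j
          simpa [dotProduct, PiLp.inner_apply, RCLike.inner_apply, conj_trivial, hu, mul_comm] using h
        have hbound : ∀ i, 0 ≤ lam i ∧ lam i ≤ 1 := by
          intro i
          refine ⟨hP.eigenvalues_nonneg i, ?_⟩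
          have h := OW.dot_nonneg hQ (u i)
          rw [sub_mulVec, one_mulVec, hmv i, dotProduct_sub, dotProduct_smul, hdot i i] at h
          norm_num at h
          linarith
        have hUU : star (hH.eigenvectorUnitary : Matrix (Fin n) (Fin n) ℝ)
            * (hH.eigenvectorUnitary : Matrix (Fin n) (Fin n) ℝ) = 1 :=
          Unitary.coe_star_mul_self _
        have hdiag := hH.spectral_theorem
        have htrace : P.trace = ∑ i, lam i := by
          conv_lhs => rw [hdiag, Unitary.conjStarAlgAut_apply]
          rw [trace_mul_cycle, hUU, Matrix.one_mul, trace_diagonal]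
          rfl
        have hidem_of : (∀ i, lam i * lam i = lam i) → P * P = P := by
          intro hall
          have hd : diagonal (RCLike.ofReal ∘ lam) * diagonal (RCLike.ofReal ∘ lam)
              = diagonal ((RCLike.ofReal : ℝ → ℝ) ∘ lam) := by
            rw [diagonal_mul_diagonal]
            exact congrArg diagonal (funext fun i => hall i)
          conv_lhs => rw [hdiag, Unitary.conjStarAlgAut_apply]
          conv_rhs => rw [hdiag, Unitary.conjStarAlgAut_apply]
          set U : Matrix (Fin n) (Fin n) ℝ := (hH.eigenvectorUnitary : Matrix (Fin n) (Fin n) ℝ)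
            with hUdef
          calc (U * diagonal (RCLike.ofReal ∘ lam) * star U)
                * (U * diagonal (RCLike.ofReal ∘ lam) * star U)
              = U * (diagonal (RCLike.ofReal ∘ lam) * ((star U * U)
                  * (diagonal (RCLike.ofReal ∘ lam) * star U))) := by
                simp only [Matrix.mul_assoc]
            _ = U * diagonal (RCLike.ofReal ∘ lam) * star U := by
                rw [hUU, Matrix.one_mul, ← Matrix.mul_assoc (diagonal _), hd,
                  Matrix.mul_assoc]
        have hex : ∃ i, lam i * lam i ≠ lam i := by
          by_contra hcon
          push_neg at hcon
          exact hne (hidem_of hcon)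
        obtain ⟨i, hi⟩ := hex
        have hstrict : ∀ m : Fin n, lam m * lam m ≠ lam m → 0 < lam m ∧ lam m < 1 := by
          intro m hm
          have h0 : lam m ≠ 0 := fun h => hm (by rw [h]; ring)
          have h1 : lam m ≠ 1 := fun h => hm (by rw [h]; ring)
          exact ⟨(hbound m).1.lt_of_ne (Ne.symm h0), (hbound m).2.lt_of_ne h1⟩
        have hij : ∃ j, j ≠ i ∧ lam j * lam j ≠ lam j := by
          by_contra hcon
          push_neg at hcon
          have hsum1 : ∑ m, lam m = lam i + ∑ m ∈ Finset.univ.erase i, lam m :=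
            (Finset.add_sum_erase _ _ (Finset.mem_univ i)).symm
          have hsum2 : ∑ m ∈ Finset.univ.erase i, lam m
              = ((Finset.univ.erase i).filter (fun m => lam m = 1)).card := by
            rw [← Finset.sum_boole]
            refine Finset.sum_congr rfl fun m hm => ?_
            have hm' : m ≠ i := Finset.ne_of_mem_erase hm
            have hmm := hcon m hm'
            have hfac : lam m * (lam m - 1) = 0 := by nlinarith
            rcases mul_eq_zero.mp hfac with h0 | h1
            · simp [h0, show lam m ≠ 1 from by rw [h0]; norm_num]
            · have : lam m = 1 := by linarith
              simp [this]
          have hlami := hstrict i hi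
          set c := ((Finset.univ.erase i).filter (fun m => lam m = 1)).card with hc
          have hkeq : (k : ℝ) = lam i + c := by
            rw [← heqk, htrace, hsum1, hsum2]
          rcases le_or_gt k c with h | h
          · have : (k : ℝ) ≤ c := Nat.cast_le.mpr h
            linarith [hlami.1]
          · have : (c : ℝ) + 1 ≤ k := by exact_mod_cast h
            linarith [hlami.2]
        obtain ⟨j, hji, hj⟩ := hij
        have hli := hstrict i hi
        have hlj := hstrict j hj
        set e := min (min (lam i) (1 - lam i)) (min (lam j) (1 - lam j)) with he
        have hepos : 0 < e :=
          lt_min (lt_min hli.1 (by linarith [hli.2])) (lt_min hlj.1 (by linarith [hlj.2]))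
        have hei : e ≤ lam i := (min_le_left _ _).trans (min_le_left _ _)
        have hei' : e ≤ 1 - lam i := (min_le_left _ _).trans (min_le_right _ _)
        have hej : e ≤ lam j := (min_le_right _ _).trans (min_le_left _ _)
        have hej' : e ≤ 1 - lam j := (min_le_right _ _).trans (min_le_right _ _)
        have hdii : u i ⬝ᵥ u i = 1 := by rw [hdot i i]; simp
        have hdjj : u j ⬝ᵥ u j = 1 := by rw [hdot j j]; simp
        have hdji : u j ⬝ᵥ u i = 0 := by rw [hdot j i]; simp [hji]
        have hmv1i : (1 - P) *ᵥ u i = (1 - lam i) • u i := by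
          rw [sub_mulVec, one_mulVec, hmv i, sub_smul, one_smul]
        have hmv1j : (1 - P) *ᵥ u j = (1 - lam j) • u j := by
          rw [sub_mulVec, one_mulVec, hmv j, sub_smul, one_smul]
        set E := vecMulVec (u i) (u i) - vecMulVec (u j) (u j) with hE
        have hEne : E ≠ 0 := by
          intro h
          have h1 : E *ᵥ u i = u i := by
            rw [hE, sub_mulVec, OW.vecMulVec_mulVec, OW.vecMulVec_mulVec, hdii, hdji,
              one_smul, zero_smul, sub_zero]
          rw [h, zero_mulVec] at h1
          rw [← h1] at hdii
          simp at hdii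
        have hA : (P + e • E).PosSemidef := by
          have h1 : P + e • E
              = (P - e • vecMulVec (u j) (u j)) + e • vecMulVec (u i) (u i) := by
            rw [hE]; module
          rw [h1]
          exact (OW.deflate hP (hmv j) hdjj hepos.le hej).add
            (OW.psd_smul_vecMulVec hepos.le _)
        have hA' : (1 - (P + e • E)).PosSemidef := by
          have h1 : 1 - (P + e • E)
              = ((1 - P) - e • vecMulVec (u i) (u i)) + e • vecMulVec (u j) (u j) := by
            rw [hE]; module
          rw [h1]
          exact (OW.deflate hQ hmv1i hdii hepos.le hei').add
            (OW.psd_smul_vecMulVec hepos.le _)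
        have hB : (P - e • E).PosSemidef := by
          have h1 : P - e • E
              = (P - e • vecMulVec (u i) (u i)) + e • vecMulVec (u j) (u j) := by
            rw [hE]; module
          rw [h1]
          exact (OW.deflate hP (hmv i) hdii hepos.le hei).add
            (OW.psd_smul_vecMulVec hepos.le _)
        have hB' : (1 - (P - e • E)).PosSemidef := by
          have h1 : 1 - (P - e • E)
              = ((1 - P) - e • vecMulVec (u j) (u j)) + e • vecMulVec (u i) (u i) := by
            rw [hE]; module
          rw [h1]
          exact (OW.deflate hQ hmv1j hdjj hepos.le hej').add
            (OW.psd_smul_vecMulVec hepos.le _)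
        have htE : E.trace = 0 := by
          rw [hE, trace_sub, OW.trace_vecMulVec, OW.trace_vecMulVec, hdii, hdjj, sub_self]
        have htA : (P + e • E).trace ≤ (k : ℝ) := by
          rw [trace_add, trace_smul, htE, smul_zero, add_zero]; exact htr
        have htB : (P - e • E).trace ≤ (k : ℝ) := by
          rw [trace_sub, trace_smul, htE, smul_zero, sub_zero]; exact htr
        have hseg : P ∈ openSegment ℝ (P + e • E) (P - e • E) :=
          ⟨1/2, 1/2, by norm_num, by norm_num, by norm_num, by module⟩
        have hcol := (hext _ ⟨hA, hA', htA⟩ _ ⟨hB, hB', htB⟩ hseg).1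
        rw [add_eq_left, smul_eq_zero] at hcol
        rcases hcol with h | h
        · exact hepos.ne' h
        · exact hEne h
    · rintro ⟨hs, hi, htr⟩
      obtain ⟨hs', hi'⟩ := OW.one_sub_proj hs hi
      refine ⟨⟨OW.proj_psd hs hi, OW.proj_psd hs' hi', htr⟩, ?_⟩
      rintro A ⟨hA, hA', _⟩ B ⟨hB, hB', _⟩ ⟨a, b, ha, hb, hab, hsum⟩
      exact ⟨OW.endpoint_eq hi hA hA' hB hB' ha hb hab hsum,
        OW.endpoint_eq hi hB hB' hA hA' hb ha (by linarith)
          (by rw [add_comm]; exact hsum)⟩
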